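/- For τ ≥ 1/3, the equation (1 + τξ²)·sinh(ξ) = ξ·cosh(ξ) has ξ = 0 as its only real solution; equivalently, m_τ(ξ) > 1 for all ξ ≠ 0. -/

import Mathlib

noncomputable def mSq (τ ξ : ℝ) : ℝ :=
  (1 + τ * ξ ^ 2) * (if ξ = 0 then 1 else Real.tanh ξ / ξ)

noncomputable def mSymb (τ ξ : ℝ) : ℝ := Real.sqrt (mSq τ ξ)

private lemma aux1 {x : ℝ} (hx : 0 < x) : Real.sinh x < x * Real.cosh x := by
  have h : StrictMonoOn (fun x : ℝ => x * Real.cosh x - Real.sinh x) (Set.Ici 0) := by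
    apply strictMonoOn_of_deriv_pos (convex_Ici 0)
    · fun_prop
    · intro y hy
      rw [interior_Ici] at hy
      have hd : HasDerivAt (fun x : ℝ => x * Real.cosh x - Real.sinh x)
          (y * Real.sinh y) y := by
        have := ((hasDerivAt_id y).mul (Real.hasDerivAt_cosh y)).sub (Real.hasDerivAt_sinh y)
        exact this.congr_deriv (by simp only [id_eq, one_mul]; ring)
      rw [hd.deriv]
      exact mul_pos hy (Real.sinh_pos_iff.mpr hy)
  have := h Set.self_mem_Ici (Set.mem_Ici.mpr hx.le) hx
  simp only [Real.cosh_zero, Real.sinh_zero, zero_mul, sub_zero] at this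
  linarith

private lemma aux2 {x : ℝ} (hx : 0 < x) :
    x * Real.cosh x < (1 + x ^ 2 / 3) * Real.sinh x := by
  have h : StrictMonoOn (fun x : ℝ => (1 + x ^ 2 / 3) * Real.sinh x - x * Real.cosh x)
      (Set.Ici 0) := by
    apply strictMonoOn_of_deriv_pos (convex_Ici 0)
    · fun_prop
    · intro y hy
      rw [interior_Ici] at hy
      have hd : HasDerivAt (fun x : ℝ => (1 + x ^ 2 / 3) * Real.sinh x - x * Real.cosh x)
          (y / 3 * (y * Real.cosh y - Real.sinh y)) y := by
        have h1 : HasDerivAt (fun x : ℝ => 1 + x ^ 2 / 3) (2 * y / 3) y := by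
          have := ((hasDerivAt_pow 2 y).div_const 3).const_add 1
          exact this.congr_deriv (by norm_num)
        have := (h1.mul (Real.hasDerivAt_sinh y)).sub
          ((hasDerivAt_id y).mul (Real.hasDerivAt_cosh y))
        exact this.congr_deriv (by simp only [id_eq, one_mul]; ring)
      rw [hd.deriv]
      have hy' : (0:ℝ) < y := hy
      exact mul_pos (by linarith) (sub_pos.mpr (aux1 hy'))
  have := h Set.self_mem_Ici (Set.mem_Ici.mpr hx.le) hx
  simp only [Real.cosh_zero, Real.sinh_zero, zero_mul, mul_zero, sub_zero] at this
  linarith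

private lemma keypos (τ : ℝ) (hτ : 1/3 ≤ τ) {ξ : ℝ} (h : 0 < ξ) :
    ξ * Real.cosh ξ < (1 + τ * ξ ^ 2) * Real.sinh ξ := by
  have h2 := aux2 h
  have hs : 0 < Real.sinh ξ := Real.sinh_pos_iff.mpr h
  have : (1 + ξ ^ 2 / 3) * Real.sinh ξ ≤ (1 + τ * ξ ^ 2) * Real.sinh ξ := by
    apply mul_le_mul_of_nonneg_right _ hs.le
    nlinarith [sq_nonneg ξ]
  linarith

private lemma keyneg (τ : ℝ) (hτ : 1/3 ≤ τ) {ξ : ℝ} (h : ξ < 0) :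
    (1 + τ * ξ ^ 2) * Real.sinh ξ < ξ * Real.cosh ξ := by
  have h2 := keypos τ hτ (ξ := -ξ) (by linarith)
  simp only [Real.sinh_neg, Real.cosh_neg, neg_sq, mul_neg, neg_mul, neg_lt_neg_iff] at h2
  linarith

private lemma mSq_gt_one (τ : ℝ) (hτ : 1/3 ≤ τ) {ξ : ℝ} (hξ : ξ ≠ 0) :
    1 < mSq τ ξ := by
  have hc : 0 < Real.cosh ξ := Real.cosh_pos ξ
  have heq : mSq τ ξ = ((1 + τ * ξ ^ 2) * Real.sinh ξ) / (ξ * Real.cosh ξ) := by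
    rw [mSq, if_neg hξ, Real.tanh_eq_sinh_div_cosh]
    field_simp
  rcases hξ.lt_or_gt with h | h
  · have hk := keyneg τ hτ h
    rw [heq, one_lt_div_of_neg (by nlinarith [Real.cosh_pos (x := ξ)])]
    exact hk
  · have hk := keypos τ hτ h
    rw [heq, one_lt_div (by positivity)]
    exact hk

theorem dispersion_roots_strong_tension (τ : ℝ) (hτ : 1/3 ≤ τ) :
    ({ξ : ℝ | (1 + τ * ξ ^ 2) * Real.sinh ξ = ξ * Real.cosh ξ} = {0}) ∧
    (∀ ξ : ℝ, ξ ≠ 0 → 1 < mSymb τ ξ) := by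
  constructor
  · ext ξ
    simp only [Set.mem_setOf_eq, Set.mem_singleton_iff]
    constructor
    · intro h
      by_contra hξ
      rcases lt_or_gt_of_ne hξ with h1 | h1
      · linarith [keyneg τ hτ h1]
      · linarith [keypos τ hτ h1]
    · rintro rfl; simp
  · intro ξ hξ
    have h := mSq_gt_one τ hτ hξ
    have : (1:ℝ) = Real.sqrt 1 := by simp
    rw [mSymb, this]
    exact Real.sqrt_lt_sqrt zero_le_one h
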